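/- The biwords ((1,3),(3,3),(2,3)) and ((1,3),(3,3),(2,2)) are connected by a generalized Knuth relation, but the biwords ((1,3),(2,3)) and ((1,3),(2,2)), obtained from them by removing the biletter with top entry 3, are not connected by any chain of generalized Knuth relations. -/

import Mathlib

/-- A biletter is a pair `(a, k)` of positive integers with `a ≤ k`. -/
def Biletter (p : ℕ × ℕ) : Prop := 1 ≤ p.1 ∧ p.1 ≤ p.2

/-- A plactic biword: a word of biletters with weakly decreasing bottom row. -/
def Plactic (Q : List (ℕ × ℕ)) : Prop :=
  (∀ p ∈ Q, Biletter p) ∧ (Q.map Prod.snd).Pairwise (· ≥ ·)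

/-- One application of a generalized Knuth relation (both sides must be plactic). -/
inductive KnuthStep : List (ℕ × ℕ) → List (ℕ × ℕ) → Prop
  | rel1 (u v : List (ℕ × ℕ)) (a b c k : ℕ) (h1 : a < b) (h2 : b ≤ c)
      (hL : Plactic (u ++ [(b,k),(a,k),(c,k)] ++ v))
      (hR : Plactic (u ++ [(b,k),(c,k),(a,k)] ++ v)) :
      KnuthStep (u ++ [(b,k),(a,k),(c,k)] ++ v) (u ++ [(b,k),(c,k),(a,k)] ++ v)
  | rel2 (u v : List (ℕ × ℕ)) (a b c k : ℕ) (h1 : a ≤ b) (h2 : b < c)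
      (hL : Plactic (u ++ [(a,k),(c,k),(b,k)] ++ v))
      (hR : Plactic (u ++ [(c,k),(a,k),(b,k)] ++ v)) :
      KnuthStep (u ++ [(a,k),(c,k),(b,k)] ++ v) (u ++ [(c,k),(a,k),(b,k)] ++ v)
  | rel3 (u v : List (ℕ × ℕ)) (a b k : ℕ) (h : a ≤ b)
      (hL : Plactic (u ++ [(a,k),(b,k)] ++ v))
      (hR : Plactic (u ++ [(a,k+1),(b,k)] ++ v)) :
      KnuthStep (u ++ [(a,k),(b,k)] ++ v) (u ++ [(a,k+1),(b,k)] ++ v)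
  | rel4 (u v : List (ℕ × ℕ)) (a b k : ℕ) (h : a < b)
      (hL : Plactic (u ++ [(b,k+1),(a,k+1)] ++ v))
      (hR : Plactic (u ++ [(b,k+1),(a,k)] ++ v)) :
      KnuthStep (u ++ [(b,k+1),(a,k+1)] ++ v) (u ++ [(b,k+1),(a,k)] ++ v)

/-- Two biwords are connected by a single generalized Knuth relation. -/
def KnuthRel (Q Q' : List (ℕ × ℕ)) : Prop := KnuthStep Q Q' ∨ KnuthStep Q' Q

/-- Connected by a finite chain of generalized Knuth relations. -/
def KnuthEquiv : List (ℕ × ℕ) → List (ℕ × ℕ) → Prop := Relation.ReflTransGen KnuthRel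

/-- `Q_{>i}`: remove all biletters with top entry at most `i`. -/
def after (i : ℕ) (Q : List (ℕ × ℕ)) : List (ℕ × ℕ) := Q.filter (fun p => i < p.1)

def S (Q : List (ℕ × ℕ)) : Prop := Q = [(1,3),(2,3)] ∨ Q = [(1,4),(2,3)]

lemma step_closed {Q Q' : List (ℕ × ℕ)} (h : KnuthStep Q Q') :
    (S Q → S Q') ∧ (S Q' → S Q) := by
  cases h with
  | rel1 u v a b c k h1 h2 hL hR =>
    constructor <;> intro hS <;> rcases hS with h | h <;>
      · have := congrArg List.length h; simp at this; omega
  | rel2 u v a b c k h1 h2 hL hR =>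
    constructor <;> intro hS <;> rcases hS with h | h <;>
      · have := congrArg List.length h; simp at this; omega
  | rel3 u v a b k h hL hR =>
    constructor <;> intro hS <;> rcases hS with h' | h' <;>
      rcases u with _ | ⟨x, _ | ⟨y, u⟩⟩ <;> simp_all [S] <;> omega
  | rel4 u v a b k h hL hR =>
    constructor <;> intro hS <;> rcases hS with h' | h' <;>
      rcases u with _ | ⟨x, _ | ⟨y, u⟩⟩ <;> simp_all [S] <;> omega

theorem knuth_removal_below_counterexample :
    KnuthRel [(1,3),(3,3),(2,3)] [(1,3),(3,3),(2,2)] ∧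
    ¬ KnuthEquiv [(1,3),(2,3)] [(1,3),(2,2)] := by
  constructor
  · left
    have := KnuthStep.rel4 [(1,3)] [] 2 3 2 (by omega)
      (by constructor <;> simp [Biletter]) (by constructor <;> simp [Biletter])
    simpa using this
  · intro h
    have key : ∀ Q, KnuthEquiv [(1,3),(2,3)] Q → S Q := by
      intro Q hQ
      induction hQ with
      | refl => exact Or.inl rfl
      | tail _ hstep ih =>
        rcases hstep with hs | hs
        · exact (step_closed hs).1 ih
        · exact (step_closed hs).2 ih
    have := key _ h
    rcases this with h' | h' <;> simp at h'
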